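/- arXiv:0912.1779 — 4 statements merged into one kernel-verified Lean document; each statement's English description precedes it below -/
import Mathlib

section
/- Let n ≥ 1 and 1 ≤ q ≤ n, and let ω = (ω_I) be a formal q-form on ℂⁿ. Suppose that for every a ∈ (ℂ*)ⁿ the pullback a^*ω is proportional to ω. Then there exist a formal power series f ∈ ℂ[[x_1,…,x_n]] and scalars λ_I ∈ ℂ, one for each q-element subset I of {1,…,n}, such that (∏_{i∈I} x_i)·ω_I = λ_I·f in ℂ[[x_1,…,x_n]] for every q-element subset I. (In other words, ω = f·Σ_I λ_I dx_I/x_I.) -/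
/-- Rescaling of a formal power series: `(rescaleMv a f)` is `f(a₁x₁, …, aₙxₙ)`,
whose coefficient at the multidegree `d` is `(∏ i, a i ^ d i) * (coeff d f)`. -/
noncomputable def rescaleMv {n : ℕ} (a : Fin n → ℂ) (f : MvPowerSeries (Fin n) ℂ) :
    MvPowerSeries (Fin n) ℂ :=
  fun d => (∏ i, a i ^ d i) * MvPowerSeries.coeff d f

/-- The pullback `a^*ω` of a formal `q`-form `ω = (ω_I)_I` under the diagonal map
`x ↦ (a₁x₁, …, aₙxₙ)`: `(a^*ω)_I = (∏_{i ∈ I} a_i) · ω_I(a₁x₁, …, aₙxₙ)`. -/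
noncomputable def pullbackForm {n : ℕ} (a : Fin n → ℂ)
    (ω : Finset (Fin n) → MvPowerSeries (Fin n) ℂ) :
    Finset (Fin n) → MvPowerSeries (Fin n) ℂ :=
  fun I => (∏ i ∈ I, a i) • rescaleMv a (ω I)

/-- `a^*ω` is proportional to `ω` (as formal `q`-forms):
`(a^*ω)_I · ω_J = (a^*ω)_J · ω_I` for all `q`-element subsets `I, J`. -/
def PullbackProportional {n : ℕ} (q : ℕ) (a : Fin n → ℂ)
    (ω : Finset (Fin n) → MvPowerSeries (Fin n) ℂ) : Prop :=
  ∀ I J : Finset (Fin n), I.card = q → J.card = q →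
    pullbackForm a ω I * ω J = pullbackForm a ω J * ω I

namespace TorusAux

open MvPowerSeries

/-- The indicator multidegree of a subset `I`. -/
noncomputable def ind {n : ℕ} (I : Finset (Fin n)) : Fin n →₀ ℕ := ∑ i ∈ I, Finsupp.single i 1

lemma ind_apply {n : ℕ} (I : Finset (Fin n)) (i : Fin n) :
    ind I i = if i ∈ I then 1 else 0 := by
  classical
  simp [ind, Finsupp.finset_sum_apply, Finsupp.single_apply, Finset.sum_ite_eq']

lemma ind_le_one {n : ℕ} (I : Finset (Fin n)) (i : Fin n) : ind I i ≤ 1 := by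
  rw [ind_apply]; split <;> simp

lemma prod_pow_ind {n : ℕ} (a : Fin n → ℂ) (I : Finset (Fin n)) :
    (∏ i, a i ^ (ind I) i) = ∏ i ∈ I, a i := by
  classical
  rw [Finset.prod_congr rfl (fun i _ => by rw [ind_apply])]
  simp [apply_ite (a · ^ ·)]

lemma prod_X_eq {n : ℕ} (I : Finset (Fin n)) :
    (∏ i ∈ I, (MvPowerSeries.X i : MvPowerSeries (Fin n) ℂ)) = monomial (ind I) 1 := by
  classical
  induction I using Finset.induction with
  | empty => simp [ind]
  | @insert a s h ih =>
      have hind : ind (insert a s) = Finsupp.single a 1 + ind s := by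
        simp [ind, Finset.sum_insert h]
      rw [Finset.prod_insert h, ih, X, monomial_mul_monomial, one_mul, hind]

lemma coeff_phi {n : ℕ} (ω : MvPowerSeries (Fin n) ℂ) (I : Finset (Fin n)) (v : Fin n →₀ ℕ) :
    MvPowerSeries.coeff v ((∏ i ∈ I, MvPowerSeries.X i) * ω)
      = if ind I ≤ v then MvPowerSeries.coeff (v - ind I) ω else 0 := by
  rw [prod_X_eq, coeff_monomial_mul]
  simp

/-- Key step: the proportionality of the pullback for all invertible diagonal `a` is a
polynomial identity in `a`, and extracting individual coefficients of that polynomial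
yields coefficientwise identities. -/
lemma coeff_identity {n : ℕ} (ωI ωJ : MvPowerSeries (Fin n) ℂ) (I J : Finset (Fin n))
    (h : ∀ a : Fin n → ℂ, (∀ i, a i ≠ 0) →
      ((∏ i ∈ I, a i) • rescaleMv a ωI) * ωJ = ((∏ i ∈ J, a i) • rescaleMv a ωJ) * ωI)
    (m u : Fin n →₀ ℕ) :
    (∑ d ∈ Finset.HasAntidiagonal.antidiagonal m,
        if d.1 + ind I = u then MvPowerSeries.coeff d.1 ωI * MvPowerSeries.coeff d.2 ωJ else 0)
      = (∑ d ∈ Finset.HasAntidiagonal.antidiagonal m,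
        if d.1 + ind J = u then MvPowerSeries.coeff d.1 ωJ * MvPowerSeries.coeff d.2 ωI else 0) := by
  classical
  set P : MvPolynomial (Fin n) ℂ :=
    ∑ d ∈ Finset.HasAntidiagonal.antidiagonal m,
      (MvPolynomial.monomial (d.1 + ind I) (MvPowerSeries.coeff d.1 ωI * MvPowerSeries.coeff d.2 ωJ)
        - MvPolynomial.monomial (d.1 + ind J) (MvPowerSeries.coeff d.1 ωJ * MvPowerSeries.coeff d.2 ωI))
    with hP
  have heval : ∀ a : Fin n → ℂ, (∀ i, a i ≠ 0) → MvPolynomial.eval a P = 0 := by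
    intro a ha
    have h1 := congrArg (MvPowerSeries.coeff m) (h a ha)
    rw [MvPowerSeries.coeff_mul, MvPowerSeries.coeff_mul] at h1
    have hco : ∀ (K : Finset (Fin n)) (f : MvPowerSeries (Fin n) ℂ) (d : Fin n →₀ ℕ),
        MvPowerSeries.coeff d ((∏ i ∈ K, a i) • rescaleMv a f)
          = (∏ i, a i ^ (ind K) i) * ((∏ i, a i ^ d i) * MvPowerSeries.coeff d f) := by
      intro K f d
      rw [MvPowerSeries.coeff_smul, prod_pow_ind]
      rfl
    simp only [hco] at h1
    rw [hP]
    simp only [map_sum, map_sub, MvPolynomial.eval_monomial, Finsupp.prod_pow,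
      Finsupp.add_apply, pow_add, Finset.prod_mul_distrib]
    rw [Finset.sum_sub_distrib, sub_eq_zero]
    calc (∑ d ∈ Finset.HasAntidiagonal.antidiagonal m,
            MvPowerSeries.coeff d.1 ωI * MvPowerSeries.coeff d.2 ωJ *
              ((∏ i, a i ^ d.1 i) * ∏ i, a i ^ (ind I) i))
        = ∑ d ∈ Finset.HasAntidiagonal.antidiagonal m,
            (∏ i, a i ^ (ind I) i) * ((∏ i, a i ^ d.1 i) * MvPowerSeries.coeff d.1 ωI) *
              MvPowerSeries.coeff d.2 ωJ := by
          apply Finset.sum_congr rfl; intro d _; ring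
      _ = ∑ d ∈ Finset.HasAntidiagonal.antidiagonal m,
            (∏ i, a i ^ (ind J) i) * ((∏ i, a i ^ d.1 i) * MvPowerSeries.coeff d.1 ωJ) *
              MvPowerSeries.coeff d.2 ωI := by
          convert h1 using 2 with d _ <;> ring
      _ = _ := by apply Finset.sum_congr rfl; intro d _; ring
  have hP0 : P = 0 := by
    have hQ : (∏ i, MvPolynomial.X i : MvPolynomial (Fin n) ℂ) * P = 0 := by
      apply MvPolynomial.funext
      intro a
      by_cases ha : ∀ i, a i ≠ 0
      · simp [heval a ha]
      · push_neg at ha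
        obtain ⟨i, hi⟩ := ha
        have : (∏ j, a j) = 0 := Finset.prod_eq_zero (Finset.mem_univ i) hi
        simp [this]
    rcases mul_eq_zero.mp hQ with h0 | h0
    · exfalso
      have := congrArg (MvPolynomial.eval fun _ : Fin n => (1 : ℂ)) h0
      simp at this
    · exact h0
  have := congrArg (MvPolynomial.coeff u) hP0
  rw [hP] at this
  simp only [MvPolynomial.coeff_sum, MvPolynomial.coeff_sub, MvPolynomial.coeff_monomial,
    MvPolynomial.coeff_zero, Finset.sum_sub_distrib] at this
  exact sub_eq_zero.mp this

lemma prop_one {n : ℕ} (ωI ωJ : MvPowerSeries (Fin n) ℂ) (I J : Finset (Fin n))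
    (h : ∀ a : Fin n → ℂ, (∀ i, a i ≠ 0) →
      ((∏ i ∈ I, a i) • rescaleMv a ωI) * ωJ = ((∏ i ∈ J, a i) • rescaleMv a ωJ) * ωI)
    (v w : Fin n →₀ ℕ) (hIv : ind I ≤ v) (hJw : ind J ≤ w) :
    MvPowerSeries.coeff (v - ind I) ωI * MvPowerSeries.coeff (w - ind J) ωJ
      = (if ind J ≤ v then MvPowerSeries.coeff (v - ind J) ωJ else 0)
        * (if ind I ≤ w then MvPowerSeries.coeff (w - ind I) ωI else 0) := by
  classical
  have key := coeff_identity ωI ωJ I J h ((v - ind I) + (w - ind J)) v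
  have hL : (∑ d ∈ Finset.HasAntidiagonal.antidiagonal ((v - ind I) + (w - ind J)),
        if d.1 + ind I = v then MvPowerSeries.coeff d.1 ωI * MvPowerSeries.coeff d.2 ωJ else 0)
      = MvPowerSeries.coeff (v - ind I) ωI * MvPowerSeries.coeff (w - ind J) ωJ := by
    rw [Finset.sum_eq_single_of_mem (⟨v - ind I, w - ind J⟩ : (Fin n →₀ ℕ) × (Fin n →₀ ℕ))]
    · rw [if_pos (tsub_add_cancel_of_le hIv)]
    · exact Finset.HasAntidiagonal.mem_antidiagonal.mpr rfl
    · intro d hd hne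
      rw [if_neg]
      intro hc
      apply hne
      have h1 : d.1 = v - ind I := by
        ext i
        have := DFunLike.congr_fun hc i
        simp only [Finsupp.add_apply, Finsupp.tsub_apply] at *
        have := Finsupp.le_def.mp hIv i
        omega
      have h2 : d.1 + d.2 = (v - ind I) + (w - ind J) := Finset.HasAntidiagonal.mem_antidiagonal.mp hd
      rw [h1] at h2
      exact Prod.ext h1 (add_left_cancel h2)
  rw [hL] at key
  rw [key]
  by_cases hJv : ind J ≤ v
  · by_cases hIw : ind I ≤ w
    · rw [if_pos hJv, if_pos hIw]
      rw [Finset.sum_eq_single_of_mem (⟨v - ind J, w - ind I⟩ : (Fin n →₀ ℕ) × (Fin n →₀ ℕ))]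
      · rw [if_pos (tsub_add_cancel_of_le hJv)]
      · apply Finset.HasAntidiagonal.mem_antidiagonal.mpr
        ext i
        have h1 := Finsupp.le_def.mp hIv i
        have h2 := Finsupp.le_def.mp hJw i
        have h3 := Finsupp.le_def.mp hJv i
        have h4 := Finsupp.le_def.mp hIw i
        simp only [Finsupp.add_apply, Finsupp.tsub_apply]
        omega
      · intro d hd hne
        rw [if_neg]
        intro hc
        apply hne
        have h1 : d.1 = v - ind J := by
          ext i
          have := DFunLike.congr_fun hc i
          simp only [Finsupp.add_apply, Finsupp.tsub_apply] at *
          have := Finsupp.le_def.mp hJv i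
          omega
        have h2 : d.1 + d.2 = (v - ind I) + (w - ind J) := Finset.HasAntidiagonal.mem_antidiagonal.mp hd
        have h3 : (v - ind J) + (w - ind I) = (v - ind I) + (w - ind J) := by
          ext i
          have h1 := Finsupp.le_def.mp hIv i
          have h2 := Finsupp.le_def.mp hJw i
          have h3 := Finsupp.le_def.mp hJv i
          have h4 := Finsupp.le_def.mp hIw i
          simp only [Finsupp.add_apply, Finsupp.tsub_apply]
          omega
        rw [h1, ← h3] at h2
        exact Prod.ext h1 (add_left_cancel h2)
    · rw [if_neg hIw, mul_zero]
      apply Finset.sum_eq_zero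
      intro d hd
      rw [if_neg]
      intro hc
      obtain ⟨i, hi⟩ : ∃ i, w i < ind I i := by
        by_contra hcon
        push_neg at hcon
        exact hIw (Finsupp.le_def.mpr hcon)
      have hd1 : d.1 ≤ (v - ind I) + (w - ind J) :=
        le_of_add_le_left (le_of_eq (Finset.HasAntidiagonal.mem_antidiagonal.mp hd))
      have e1 : d.1 i + ind J i = v i := by
        have := DFunLike.congr_fun hc i
        simpa [Finsupp.add_apply] using this
      have e2 := Finsupp.le_def.mp hd1 i
      have e3 := Finsupp.le_def.mp hIv i
      have e4 := Finsupp.le_def.mp hJw i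
      have e5 := ind_le_one I i
      have e6 := ind_le_one J i
      simp only [Finsupp.add_apply, Finsupp.tsub_apply] at e2
      omega
  · rw [if_neg hJv, zero_mul]
    apply Finset.sum_eq_zero
    intro d hd
    rw [if_neg]
    intro hc
    exact hJv (hc ▸ le_add_self)

/-- Pairwise proportionality of the series `x^I · ω_I`. -/
lemma prop_sym {n : ℕ} (ωI ωJ : MvPowerSeries (Fin n) ℂ) (I J : Finset (Fin n))
    (h : ∀ a : Fin n → ℂ, (∀ i, a i ≠ 0) →
      ((∏ i ∈ I, a i) • rescaleMv a ωI) * ωJ = ((∏ i ∈ J, a i) • rescaleMv a ωJ) * ωI)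
    (v w : Fin n →₀ ℕ) :
    MvPowerSeries.coeff v ((∏ i ∈ I, MvPowerSeries.X i) * ωI)
        * MvPowerSeries.coeff w ((∏ i ∈ J, MvPowerSeries.X i) * ωJ)
      = MvPowerSeries.coeff v ((∏ i ∈ J, MvPowerSeries.X i) * ωJ)
        * MvPowerSeries.coeff w ((∏ i ∈ I, MvPowerSeries.X i) * ωI) := by
  classical
  rw [coeff_phi, coeff_phi, coeff_phi, coeff_phi]
  by_cases hA : ind I ≤ v
  · by_cases hB : ind J ≤ w
    · rw [if_pos hA, if_pos hB]
      exact prop_one ωI ωJ I J h v w hA hB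
    · rw [if_neg hB, mul_zero]
      by_cases hC : ind J ≤ v
      · by_cases hD : ind I ≤ w
        · have := TorusAux.prop_one ωJ ωI J I (fun a ha => (h a ha).symm) v w hC hD
          rw [if_pos hC, if_pos hD, this, if_neg hB, mul_zero]
        · rw [if_neg hD, mul_zero]
      · rw [if_neg hC, zero_mul]
  · rw [if_neg hA, zero_mul]
    by_cases hC : ind J ≤ v
    · by_cases hD : ind I ≤ w
      · have := prop_one ωJ ωI J I (fun a ha => (h a ha).symm) v w hC hD
        rw [if_pos hC, if_pos hD, this, if_neg hA, zero_mul]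
      · rw [if_neg hD, mul_zero]
    · rw [if_neg hC, zero_mul]

end TorusAux

/-- A formal `q`-form on `ℂⁿ` whose proportionality class is invariant under the
full diagonal torus `(ℂ*)ⁿ` is of the form `f · Σ_I λ_I dx_I/x_I`, i.e.
`(∏_{i∈I} x_i) · ω_I = λ_I · f` for every `q`-element subset `I`. -/
theorem torus_invariant_formal_q_form_normal_form
    (n q : ℕ) (hn : 1 ≤ n) (hq1 : 1 ≤ q) (hqn : q ≤ n)
    (ω : Finset (Fin n) → MvPowerSeries (Fin n) ℂ)
    (hinv : ∀ a : Fin n → ℂ, (∀ i, a i ≠ 0) → PullbackProportional q a ω) :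
    ∃ (f : MvPowerSeries (Fin n) ℂ) (lam : Finset (Fin n) → ℂ),
      ∀ I : Finset (Fin n), I.card = q →
        (∏ i ∈ I, MvPowerSeries.X i) * ω I = lam I • f := by
  classical
  have prop : ∀ I J : Finset (Fin n), I.card = q → J.card = q → ∀ v w : Fin n →₀ ℕ,
      MvPowerSeries.coeff v ((∏ i ∈ I, MvPowerSeries.X i) * ω I)
          * MvPowerSeries.coeff w ((∏ i ∈ J, MvPowerSeries.X i) * ω J)
        = MvPowerSeries.coeff v ((∏ i ∈ J, MvPowerSeries.X i) * ω J)
          * MvPowerSeries.coeff w ((∏ i ∈ I, MvPowerSeries.X i) * ω I) := by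
    intro I J hI hJ v w
    exact TorusAux.prop_sym (ω I) (ω J) I J (fun a ha => hinv a ha I J hI hJ) v w
  by_cases hall : ∀ I : Finset (Fin n), I.card = q → (∏ i ∈ I, MvPowerSeries.X i) * ω I = 0
  · exact ⟨0, fun _ => 0, fun I hI => by rw [hall I hI, zero_smul]⟩
  · push_neg at hall
    obtain ⟨I₀, hI₀, hne⟩ := hall
    obtain ⟨v₀, hv₀⟩ : ∃ v₀, MvPowerSeries.coeff v₀ ((∏ i ∈ I₀, MvPowerSeries.X i) * ω I₀) ≠ 0 := by
      by_contra hcon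
      push_neg at hcon
      exact hne (MvPowerSeries.ext fun v => by rw [hcon v, map_zero])
    refine ⟨(∏ i ∈ I₀, MvPowerSeries.X i) * ω I₀,
      fun I => MvPowerSeries.coeff v₀ ((∏ i ∈ I, MvPowerSeries.X i) * ω I)
        / MvPowerSeries.coeff v₀ ((∏ i ∈ I₀, MvPowerSeries.X i) * ω I₀),
      fun I hI => ?_⟩
    apply MvPowerSeries.ext
    intro w
    rw [MvPowerSeries.coeff_smul]
    have hkey := prop I I₀ hI hI₀ v₀ w
    rw [div_mul_eq_mul_div, eq_div_iff hv₀]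
    linear_combination -hkey
end

section
/- Let μ_1,…,μ_m ∈ ℂ be such that 1, μ_1,…,μ_m are linearly independent over ℚ. If a polynomial P ∈ ℂ[z_1,…,z_m] satisfies P(e^{2πikμ_1},…,e^{2πikμ_m}) = 0 for every integer k, then P = 0. (Consequently the cyclic subgroup of (ℂ*)^m generated by (e^{2πiμ_1},…,e^{2πiμ_m}) is Zariski dense in ℂ^m.) -/
open Complex

/-- If `1, μ₁, …, μ_m` are linearly independent over `ℚ`, then any polynomial
vanishing on all points `(e^{2πikμ₁}, …, e^{2πikμ_m})`, `k ∈ ℤ`, is zero; i.e.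
the cyclic subgroup of `(ℂ*)^m` generated by `(e^{2πiμ₁}, …, e^{2πiμ_m})` is
Zariski dense in `ℂ^m`. -/
theorem cyclic_group_zariski_dense
    (m : ℕ) (μ : Fin m → ℂ)
    (hμ : LinearIndependent ℚ (Fin.cons (1 : ℂ) μ : Fin (m + 1) → ℂ))
    (P : MvPolynomial (Fin m) ℂ)
    (hP : ∀ k : ℤ,
      MvPolynomial.eval (fun i => Complex.exp (2 * Real.pi * Complex.I * k * μ i)) P = 0) :
    P = 0 := by
  classical
  set π : ℝ := Real.pi
  -- exponent of a monomial
  set L : (Fin m →₀ ℕ) → ℂ := fun d => ∑ i, (d i : ℂ) * μ i with hL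
  -- the character associated to a monomial
  set χ : (Fin m →₀ ℕ) → (Multiplicative ℤ →* ℂ) := fun d =>
    { toFun := fun k => Complex.exp (2 * π * I * L d) ^ (Multiplicative.toAdd k)
      map_one' := by simp
      map_mul' := fun a b => by
        simp [toAdd_mul, zpow_add₀ (Complex.exp_ne_zero _)] } with hχ
  -- χ is injective
  have hχinj : Function.Injective χ := by
    intro d d' h
    have h1 : Complex.exp (2 * π * I * L d) = Complex.exp (2 * π * I * L d') := by
      have := DFunLike.congr_fun h (Multiplicative.ofAdd (1 : ℤ))
      simpa [hχ] using this
    rw [Complex.exp_eq_exp_iff_exists_int] at h1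
    obtain ⟨n, hn⟩ := h1
    have h2πI : (2 * (π : ℂ) * I) ≠ 0 := by
      refine mul_ne_zero (mul_ne_zero two_ne_zero ?_) Complex.I_ne_zero
      exact_mod_cast Real.pi_ne_zero
    have hLd : L d = L d' + n := by
      have : 2 * (π:ℂ) * I * L d = 2 * (π:ℂ) * I * (L d' + n) := by
        rw [hn]; ring
      exact mul_left_cancel₀ h2πI this
    -- build a rational dependence
    set q : Fin (m + 1) → ℚ := Fin.cons (-(n : ℚ)) (fun i => (d i : ℚ) - (d' i : ℚ)) with hq
    have hsum : ∑ j, q j • (Fin.cons (1 : ℂ) μ : Fin (m+1) → ℂ) j = 0 := by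
      rw [Fin.sum_univ_succ]
      simp only [hq, Fin.cons_zero, Fin.cons_succ]
      have : ∀ i : Fin m, ((d i : ℚ) - (d' i : ℚ)) • μ i
          = (d i : ℂ) * μ i - (d' i : ℂ) * μ i := by
        intro i
        rw [Rat.smul_def]
        push_cast
        ring
      rw [Finset.sum_congr rfl (fun i _ => this i), Finset.sum_sub_distrib]
      rw [Rat.smul_def]
      have : (∑ i, (d i : ℂ) * μ i) - ∑ i, (d' i : ℂ) * μ i = (n : ℂ) := by
        have := hLd
        simp only [hL] at this
        rw [this]; ring
      rw [this]
      push_cast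
      ring
    have hq0 := Fintype.linearIndependent_iff.mp hμ q hsum
    have hdd' : ∀ i : Fin m, d i = d' i := by
      intro i
      have := hq0 i.succ
      simp only [hq, Fin.cons_succ, sub_eq_zero] at this
      exact_mod_cast this
    ext i
    exact hdd' i
  -- characters are linearly independent
  have hli : LinearIndependent ℂ (fun d => ⇑(χ d)) :=
    (linearIndependent_monoidHom (Multiplicative ℤ) ℂ).comp χ hχinj
  -- the coefficients of P give a vanishing linear combination
  have hcomb : ∑ d ∈ P.support, P.coeff d • ⇑(χ d) = 0 := by
    funext k
    have hk := hP (Multiplicative.toAdd k)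
    rw [MvPolynomial.eval_eq'] at hk
    have hterm : ∀ d : Fin m →₀ ℕ,
        (∏ i, Complex.exp (2 * π * I * (Multiplicative.toAdd k : ℤ) * μ i) ^ d i)
          = χ d k := by
      intro d
      have : ∀ i : Fin m,
          Complex.exp (2 * π * I * (Multiplicative.toAdd k : ℤ) * μ i) ^ d i
            = Complex.exp ((d i : ℂ) * (2 * π * I * (Multiplicative.toAdd k : ℤ) * μ i)) := by
        intro i
        rw [Complex.exp_nat_mul]
      rw [Finset.prod_congr rfl (fun i _ => this i), ← Complex.exp_sum]
      have : ∑ i, (d i : ℂ) * (2 * π * I * (Multiplicative.toAdd k : ℤ) * μ i)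
          = (Multiplicative.toAdd k : ℤ) * (2 * π * I * L d) := by
        simp only [hL, Finset.mul_sum]
        congr 1
        funext i
        ring
      rw [this, Complex.exp_int_mul]
      simp [hχ]
    simp only [Finset.sum_apply, Pi.zero_apply, Pi.smul_apply, smul_eq_mul]
    calc ∑ d ∈ P.support, P.coeff d * χ d k
        = ∑ d ∈ P.support, P.coeff d *
            ∏ i, Complex.exp (2 * π * I * (Multiplicative.toAdd k : ℤ) * μ i) ^ d i := by
          exact Finset.sum_congr rfl fun d _ => by rw [hterm d]
      _ = 0 := hk
  have hz := linearIndependent_iff'.mp hli P.support (fun d => P.coeff d) hcomb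
  ext d
  by_cases hd : d ∈ P.support
  · simpa using hz d hd
  · simpa [MvPolynomial.coeff_zero] using (MvPolynomial.notMem_support_iff.mp hd)
end

section
/- Let λ_1,…,λ_n ∈ ℂ be linearly independent over ℚ and fix an index i ∈ {1,…,n}. If a polynomial P in the n−1 variables z_j (j ∈ {1,…,n}, j ≠ i) with complex coefficients satisfies P((e^{2πik·λ_j/λ_i})_{j≠i}) = 0 for every integer k, then P = 0. (In other words, the Zariski closure in (ℂ*)^{n−1} of the cyclic group generated by the diagonal matrix with entries e^{2πiλ_j/λ_i}, j ≠ i, is the full diagonal torus (ℂ*)^{n−1}.) -/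
open Complex


/-- If `λ₁, …, λₙ` are linearly independent over `ℚ` and `i` is a fixed index,
then any polynomial in the variables `z_j`, `j ≠ i`, vanishing on all points
`((e^{2πik·λ_j/λ_i})_{j ≠ i})`, `k ∈ ℤ`, is zero; i.e. the Zariski closure of
the cyclic group generated by the diagonal matrix with entries `e^{2πiλ_j/λ_i}`,
`j ≠ i`, is the full diagonal torus `(ℂ*)^{n-1}`. -/
theorem holonomy_closure_is_maximal_torus
    (n : ℕ) (lam : Fin n → ℂ) (hlam : LinearIndependent ℚ lam) (i : Fin n)
    (P : MvPolynomial {j : Fin n // j ≠ i} ℂ)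
    (hP : ∀ k : ℤ,
      MvPolynomial.eval
        (fun j : {j : Fin n // j ≠ i} =>
          Complex.exp (2 * Real.pi * Complex.I * k * (lam j.1 / lam i))) P = 0) :
    P = 0 := by
  classical
  have hlami : lam i ≠ 0 := hlam.ne_zero i
  set c : ℂ := 2 * Real.pi * Complex.I with hc
  have hcne : c ≠ 0 := by
    simp [hc, Real.pi_ne_zero, Complex.I_ne_zero, Complex.ofReal_ne_zero]
  set S : ({j : Fin n // j ≠ i} →₀ ℕ) → ℂ :=
    fun d => ∑ j ∈ d.support, (d j : ℂ) * (lam j.1 / lam i) with hS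
  set F : ({j : Fin n // j ≠ i} →₀ ℕ) → (Multiplicative ℤ →* ℂ) :=
    fun d =>
      { toFun := fun x => Complex.exp (c * ((Multiplicative.toAdd x : ℤ) : ℂ) * S d)
        map_one' := by simp
        map_mul' := by
          intro a b
          show Complex.exp (c * ((Multiplicative.toAdd a + Multiplicative.toAdd b : ℤ) : ℂ) * S d)
            = _
          rw [← Complex.exp_add]
          congr 1
          push_cast
          ring } with hF
  -- key arithmetic fact: if S d = S d' + m for an integer m, then d = d' (and m = 0)
  have hSkey : ∀ (d d' : {j : Fin n // j ≠ i} →₀ ℕ) (m : ℤ), S d = S d' + m → d = d' := by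
    intro d d' m h
    have key : ∀ e : {j : Fin n // j ≠ i} →₀ ℕ,
        S e * lam i = ∑ j : {j : Fin n // j ≠ i}, (e j : ℂ) * lam j.1 := by
      intro e
      rw [hS]
      rw [Finset.sum_mul]
      rw [← Finset.sum_subset (Finset.subset_univ e.support)
        (by intro j _ hj; simp [Finsupp.notMem_support_iff.mp hj])]
      apply Finset.sum_congr rfl
      intro j _
      field_simp
    have hmul : ∑ j : {j : Fin n // j ≠ i}, (d j : ℂ) * lam j.1
        = ∑ j : {j : Fin n // j ≠ i}, (d' j : ℂ) * lam j.1 + (m : ℂ) * lam i := by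
      rw [← key, ← key, h]; ring
    set g : Fin n → ℚ := fun j =>
      if h : j = i then -(m : ℚ) else ((d ⟨j, h⟩ : ℚ) - (d' ⟨j, h⟩ : ℚ)) with hg
    have hsum : ∑ j, g j • lam j = 0 := by
      rw [← Finset.add_sum_erase _ _ (Finset.mem_univ i)]
      have h1 : g i • lam i = -((m : ℂ) * lam i) := by
        simp only [hg, dif_pos rfl, Rat.smul_def]
        push_cast
        ring
      rw [h1]
      rw [Finset.sum_subtype (p := fun j => j ≠ i) (Finset.univ.erase i)
        (fun j => by simp) (fun j => g j • lam j)]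
      have h2 : ∀ j : {j : Fin n // j ≠ i}, g j.1 • lam j.1
          = (d j : ℂ) * lam j.1 - (d' j : ℂ) * lam j.1 := by
        intro j
        simp only [hg, dif_neg j.2, Rat.smul_def]
        push_cast
        ring
      rw [Finset.sum_congr rfl (fun j _ => h2 j), Finset.sum_sub_distrib, hmul]
      ring
    have hz := Fintype.linearIndependent_iff.mp hlam g hsum
    ext j
    have hj := hz j.1
    rw [hg] at hj
    simp only [dif_neg j.2, sub_eq_zero] at hj
    exact_mod_cast hj
  have hFinj : Function.Injective F := by
    intro d d' h
    have h1 : Complex.exp (c * S d) = Complex.exp (c * S d') := by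
      have := congrArg (fun f : Multiplicative ℤ →* ℂ => f (Multiplicative.ofAdd 1)) h
      simpa [hF] using this
    rw [Complex.exp_eq_exp_iff_exists_int] at h1
    obtain ⟨m, hm⟩ := h1
    refine hSkey d d' m ?_
    have : c * S d = c * (S d' + m) := by rw [hm, hc]; ring
    exact mul_left_cancel₀ hcne this
  -- the evaluation of P at the k-th point is the value of the character combination
  have heval : ∀ k : ℤ,
      ∑ d ∈ P.support, P.coeff d * F d (Multiplicative.ofAdd k) = 0 := by
    intro k
    have := hP k
    rw [MvPolynomial.eval_eq] at this
    rw [← this]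
    apply Finset.sum_congr rfl
    intro d _
    congr 1
    have : F d (Multiplicative.ofAdd k) = Complex.exp (c * (k : ℂ) * S d) := rfl
    rw [this, hS]
    rw [Finset.mul_sum, Complex.exp_sum]
    apply Finset.prod_congr rfl
    intro j _
    rw [← Complex.exp_nat_mul]
    congr 1
    ring
  have hzero : (∑ d ∈ P.support, P.coeff d • ((F d : Multiplicative ℤ → ℂ))) = 0 := by
    funext x
    simp only [Finset.sum_apply, Pi.smul_apply, Pi.zero_apply, smul_eq_mul]
    exact heval (Multiplicative.toAdd x)
  have li : LinearIndependent ℂ (fun d : ({j : Fin n // j ≠ i} →₀ ℕ) =>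
      ((F d : Multiplicative ℤ → ℂ))) :=
    (linearIndependent_monoidHom (Multiplicative ℤ) ℂ).comp F hFinj
  have hcoeff := linearIndependent_iff'.mp li P.support (fun d => P.coeff d) hzero
  ext d
  by_cases hd : d ∈ P.support
  · simpa using hcoeff d hd
  · simpa using MvPolynomial.notMem_support_iff.mp hd
end

section
/- Let λ_1,…,λ_n ∈ ℂ be linearly independent over ℚ, let 1 ≤ q ≤ n, and let ω be a formal q-form on ℂⁿ. For t ∈ ℂ write φ_t = (e^{λ_1 t},…,e^{λ_n t}) ∈ (ℂ*)ⁿ. If for every t ∈ ℂ the pullback φ_t^*ω is proportional to ω, then for every a ∈ (ℂ*)ⁿ the pullback a^*ω is proportional to ω. (The stabilizer of the proportionality class of ω is a Zariski closed subgroup of the torus containing the one-parameter subgroup determined by the flow of Σ_i λ_i x_i ∂/∂x_i, hence is all of (ℂ*)ⁿ.) -/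
noncomputable def expChar (μ : ℂ) : Multiplicative ℂ →* ℂ where
  toFun t := Complex.exp (μ * t.toAdd)
  map_one' := by simp
  map_mul' x y := by simp [toAdd_mul, mul_add, Complex.exp_add]

lemma expChar_injective : Function.Injective expChar := by
  intro μ ν h
  by_contra hne
  have hd : μ - ν ≠ 0 := sub_ne_zero.mpr hne
  have := congrArg (fun f : Multiplicative ℂ →* ℂ =>
    f (Multiplicative.ofAdd ((Real.pi : ℂ) * Complex.I / (μ - ν)))) h
  simp only [expChar, MonoidHom.coe_mk, OneHom.coe_mk, toAdd_ofAdd] at this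
  have h2 : Complex.exp ((μ - ν) * ((Real.pi : ℂ) * Complex.I / (μ - ν))) = 1 := by
    rw [sub_mul, Complex.exp_sub, this, div_self]
    exact Complex.exp_ne_zero _
  rw [mul_div_cancel₀ _ hd, Complex.exp_pi_mul_I] at h2
  norm_num at h2

lemma exp_comb_eq_zero {ι : Type*} (T : Finset ι) (μ : ι → ℂ) (hμ : Set.InjOn μ T)
    (c : ι → ℂ) (h : ∀ t : ℂ, ∑ m ∈ T, c m * Complex.exp (μ m * t) = 0) :
    ∀ m ∈ T, c m = 0 := by
  classical
  have hli : LinearIndependent ℂ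
      (fun m : {x // x ∈ T} => (expChar (μ m.1) : Multiplicative ℂ → ℂ)) := by
    refine (linearIndependent_monoidHom (Multiplicative ℂ) ℂ).comp
      (fun m : {x // x ∈ T} => expChar (μ m.1)) ?_
    intro x y hxy
    exact Subtype.ext (hμ x.2 y.2 (expChar_injective hxy))
  have h0 : ∑ m : {x // x ∈ T}, c m.1 • (expChar (μ m.1) : Multiplicative ℂ → ℂ) = 0 := by
    funext t
    have := h t.toAdd
    simpa [Finset.sum_apply, expChar, ← Finset.sum_attach T] using this
  intro m hm
  exact Fintype.linearIndependent_iff.mp hli (fun m => c m.1) h0 ⟨m, hm⟩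

lemma rate_injective {n : ℕ} (lam : Fin n → ℂ) (hlam : LinearIndependent ℚ lam) :
    Function.Injective (fun m : Fin n →₀ ℕ => ∑ i, (m i : ℂ) * lam i) := by
  intro m m' h
  simp only at h
  have hg : ∀ i, ((m i : ℚ) - (m' i : ℚ)) = 0 := by
    apply Fintype.linearIndependent_iff.mp hlam
    have : ∑ i, (((m i : ℚ) - (m' i : ℚ)) • lam i)
        = ∑ i, (m i : ℂ) * lam i - ∑ i, (m' i : ℂ) * lam i := by
      rw [← Finset.sum_sub_distrib]
      refine Finset.sum_congr rfl fun i _ => ?_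
      rw [Rat.smul_def]
      push_cast
      ring
    rw [this, h, sub_self]
  ext i
  have h1 := hg i
  have h2 : (m i : ℚ) = (m' i : ℚ) := by linarith
  exact_mod_cast h2

lemma prod_pow_add_indicator {n : ℕ} (b : Fin n → ℂ) (K : Finset (Fin n)) (d : Fin n →₀ ℕ) :
    ∏ i, b i ^ ((d + ∑ j ∈ K, Finsupp.single j 1 : Fin n →₀ ℕ) i)
      = (∏ i ∈ K, b i) * ∏ i, b i ^ d i := by
  classical
  have hind : ∀ i, ((∑ j ∈ K, Finsupp.single j 1 : Fin n →₀ ℕ)) i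
      = if i ∈ K then 1 else 0 := by
    intro i
    rw [Finset.sum_apply']
    simp [Finsupp.single_apply]
  have hterm : ∀ i, b i ^ ((d + ∑ j ∈ K, Finsupp.single j 1 : Fin n →₀ ℕ) i)
      = (if i ∈ K then b i else 1) * b i ^ d i := by
    intro i
    rw [Finsupp.add_apply, pow_add, hind, mul_comm]
    split <;> simp [mul_comm]
  rw [Finset.prod_congr rfl fun i _ => hterm i, Finset.prod_mul_distrib,
    Finset.prod_ite_mem, Finset.univ_inter]

lemma coeff_pullback_grouped {n : ℕ} (b : Fin n → ℂ)
    (ω : Finset (Fin n) → MvPowerSeries (Fin n) ℂ) (K L : Finset (Fin n)) (e : Fin n →₀ ℕ)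
    (T : Finset (Fin n →₀ ℕ))
    (hmaps : ∀ p ∈ Finset.HasAntidiagonal.antidiagonal e,
      p.1 + (∑ j ∈ K, Finsupp.single j 1 : Fin n →₀ ℕ) ∈ T) :
    MvPowerSeries.coeff e (pullbackForm b ω K * ω L)
      = ∑ m ∈ T,
          (∑ p ∈ (Finset.HasAntidiagonal.antidiagonal e).filter
              (fun p => p.1 + (∑ j ∈ K, Finsupp.single j 1 : Fin n →₀ ℕ) = m),
            MvPowerSeries.coeff p.1 (ω K) * MvPowerSeries.coeff p.2 (ω L))
          * ∏ i, b i ^ m i := by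
  classical
  have hcm : MvPowerSeries.coeff e (pullbackForm b ω K * ω L)
      = ∑ p ∈ Finset.HasAntidiagonal.antidiagonal e,
          (MvPowerSeries.coeff p.1 (ω K) * MvPowerSeries.coeff p.2 (ω L))
            * ∏ i, b i ^ ((p.1 + ∑ j ∈ K, Finsupp.single j 1 : Fin n →₀ ℕ) i) := by
    rw [MvPowerSeries.coeff_mul]
    refine Finset.sum_congr rfl fun p hp => ?_
    have h1 : MvPowerSeries.coeff p.1 (pullbackForm b ω K)
        = (∏ i ∈ K, b i) * ((∏ i, b i ^ p.1 i) * MvPowerSeries.coeff p.1 (ω K)) := by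
      simp [pullbackForm, rescaleMv, MvPowerSeries.coeff_apply, Pi.smul_apply, smul_eq_mul]
    rw [h1, prod_pow_add_indicator]
    ring
  rw [hcm, ← Finset.sum_fiberwise_of_maps_to hmaps
      (fun p => (MvPowerSeries.coeff p.1 (ω K) * MvPowerSeries.coeff p.2 (ω L))
        * ∏ i, b i ^ ((p.1 + ∑ j ∈ K, Finsupp.single j 1 : Fin n →₀ ℕ) i))]
  refine Finset.sum_congr rfl fun m hm => ?_
  rw [Finset.sum_mul]
  refine Finset.sum_congr rfl fun p hp => ?_
  rw [(Finset.mem_filter.mp hp).2]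

/-- If the proportionality class of a formal `q`-form `ω` is preserved by the
one-parameter subgroup `t ↦ (e^{λ₁t}, …, e^{λₙt})` with `λ₁, …, λₙ` linearly
independent over `ℚ`, then it is preserved by the whole torus `(ℂ*)ⁿ`. -/
theorem flow_invariant_implies_torus_invariant
    (n q : ℕ) (hq1 : 1 ≤ q) (hqn : q ≤ n)
    (lam : Fin n → ℂ) (hlam : LinearIndependent ℚ lam)
    (ω : Finset (Fin n) → MvPowerSeries (Fin n) ℂ)
    (hflow : ∀ t : ℂ, PullbackProportional q (fun i => Complex.exp (lam i * t)) ω) :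
    ∀ a : Fin n → ℂ, (∀ i, a i ≠ 0) → PullbackProportional q a ω := by
  classical
  intro a _ I J hI hJ
  apply MvPowerSeries.ext
  intro e
  set T : Finset (Fin n →₀ ℕ) :=
    (Finset.HasAntidiagonal.antidiagonal e).image
        (fun p : (Fin n →₀ ℕ) × (Fin n →₀ ℕ) =>
          p.1 + (∑ j ∈ I, Finsupp.single j 1 : Fin n →₀ ℕ))
      ∪ (Finset.HasAntidiagonal.antidiagonal e).image
        (fun p : (Fin n →₀ ℕ) × (Fin n →₀ ℕ) =>
          p.1 + (∑ j ∈ J, Finsupp.single j 1 : Fin n →₀ ℕ)) with hTdef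
  have hmapsI : ∀ p ∈ Finset.HasAntidiagonal.antidiagonal e,
      p.1 + (∑ j ∈ I, Finsupp.single j 1 : Fin n →₀ ℕ) ∈ T :=
    fun p hp => Finset.mem_union_left _ (Finset.mem_image_of_mem _ hp)
  have hmapsJ : ∀ p ∈ Finset.HasAntidiagonal.antidiagonal e,
      p.1 + (∑ j ∈ J, Finsupp.single j 1 : Fin n →₀ ℕ) ∈ T :=
    fun p hp => Finset.mem_union_right _ (Finset.mem_image_of_mem _ hp)
  set F : (Fin n →₀ ℕ) → ℂ := fun m =>
    (∑ p ∈ (Finset.HasAntidiagonal.antidiagonal e).filter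
        (fun p => p.1 + (∑ j ∈ I, Finsupp.single j 1 : Fin n →₀ ℕ) = m),
      MvPowerSeries.coeff p.1 (ω I) * MvPowerSeries.coeff p.2 (ω J))
    - (∑ p ∈ (Finset.HasAntidiagonal.antidiagonal e).filter
        (fun p => p.1 + (∑ j ∈ J, Finsupp.single j 1 : Fin n →₀ ℕ) = m),
      MvPowerSeries.coeff p.1 (ω J) * MvPowerSeries.coeff p.2 (ω I)) with hFdef
  have key : ∀ b : Fin n → ℂ,
      MvPowerSeries.coeff e (pullbackForm b ω I * ω J)
        - MvPowerSeries.coeff e (pullbackForm b ω J * ω I)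
      = ∑ m ∈ T, F m * ∏ i, b i ^ m i := by
    intro b
    rw [coeff_pullback_grouped b ω I J e T hmapsI,
      coeff_pullback_grouped b ω J I e T hmapsJ,
      ← Finset.sum_sub_distrib]
    refine Finset.sum_congr rfl fun m hm => ?_
    rw [← sub_mul]
  have hzero : ∀ t : ℂ,
      ∑ m ∈ T, F m * Complex.exp ((∑ i, (m i : ℂ) * lam i) * t) = 0 := by
    intro t
    have hprop := hflow t I J hI hJ
    have h0 : ∑ m ∈ T, F m * ∏ i, Complex.exp (lam i * t) ^ m i = 0 := by
      rw [← key (fun i => Complex.exp (lam i * t)), hprop, sub_self]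
    rw [← h0]
    refine Finset.sum_congr rfl fun m hm => ?_
    congr 1
    rw [Finset.sum_mul, Complex.exp_sum]
    refine Finset.prod_congr rfl fun i _ => ?_
    rw [← Complex.exp_nat_mul]
    congr 1
    ring
  have hFzero : ∀ m ∈ T, F m = 0 :=
    exp_comb_eq_zero T (fun m => ∑ i, (m i : ℂ) * lam i)
      ((rate_injective lam hlam).injOn) F hzero
  have hk := key a
  rw [Finset.sum_eq_zero (fun m hm => by rw [hFzero m hm, zero_mul]), sub_eq_zero] at hk
  exact hk
end
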